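/- Assume λ_k < α ≤ β. Then the map M_{α,β} is globally Lipschitz continuous from (V₂, ‖·‖_{L²}) into (V₁, ‖·‖): there exists a constant C > 0 such that ‖M_{α,β}(v₂) − M_{α,β}(v₁)‖ ≤ C ‖v₂ − v₁‖_{L²} for all v₁, v₂ ∈ V₂. -/

import Mathlib

open MeasureTheory RealInnerProductSpace Filter Topology

/-- The functional `J_{α,β}(u) = ½(B(u,u) - α∫_Ω (u⁺)² - β∫_Ω (u⁻)²)`, where the Hilbert
space `X₀` carries the Gagliardo-type inner product `B = ⟪·,·⟫` and `T : X₀ → L²(Ω)` is the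
embedding into `L²(Ω)`; note `∫_Ω (u⁺)² = ‖(Tu)⁺‖²_{L²}`. -/
noncomputable def Jfun {Ω : Type*} [MeasurableSpace Ω] {μ : Measure Ω}
    {X₀ : Type*} [NormedAddCommGroup X₀] [InnerProductSpace ℝ X₀]
    (T : X₀ →ₗ[ℝ] Lp ℝ 2 μ) (α β : ℝ) (u : X₀) : ℝ :=
  (⟪u, u⟫ - α * ‖Lp.posPart (T u)‖ ^ 2 - β * ‖Lp.negPart (T u)‖ ^ 2) / 2

noncomputable def phiAB (a b t : ℝ) : ℝ := a * (max t 0)^2 + b * (max (-t) 0)^2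

lemma phiAB_eq (a b t : ℝ) : phiAB a b t = a * t^2 + (b - a) * (min t 0)^2 := by
  rcases le_total t 0 with h | h
  · rw [phiAB, max_eq_right h, max_eq_left (by linarith), min_eq_left h]; ring
  · rw [phiAB, max_eq_left h, max_eq_right (by linarith), min_eq_right h]; ring

lemma psi_taylor (x δ : ℝ) :
    0 ≤ (min (x+δ) 0)^2 - (min x 0)^2 - 2 * min x 0 * δ ∧
    (min (x+δ) 0)^2 - (min x 0)^2 - 2 * min x 0 * δ ≤ δ^2 := by
  rcases le_total x 0 with h | h <;> rcases le_total (x+δ) 0 with h2 | h2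
  · rw [min_eq_left h, min_eq_left h2]; constructor <;> nlinarith [sq_nonneg δ]
  · rw [min_eq_left h, min_eq_right h2]; constructor <;> nlinarith [sq_nonneg (x+δ), sq_nonneg x]
  · rw [min_eq_right h, min_eq_left h2]; constructor <;> nlinarith [sq_nonneg (x+δ)]
  · rw [min_eq_right h, min_eq_right h2]; constructor <;> nlinarith [sq_nonneg δ]

lemma min_lip (x y : ℝ) : |min x 0 - min y 0| ≤ |x - y| := by
  rcases le_total x 0 with h | h <;> rcases le_total y 0 with h2 | h2
  · rw [min_eq_left h, min_eq_left h2]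
  · rw [min_eq_left h, min_eq_right h2, abs_le]
    constructor <;> nlinarith [le_abs_self (x-y), neg_abs_le (x-y)]
  · rw [min_eq_right h, min_eq_left h2, abs_le]
    constructor <;> nlinarith [le_abs_self (x-y), neg_abs_le (x-y)]
  · rw [min_eq_right h, min_eq_right h2]; simp [abs_nonneg]

lemma psi_dd_bound (t w d : ℝ) :
    |(min (t+w+d) 0)^2 - (min (t+w) 0)^2 - (min (t+d) 0)^2 + (min t 0)^2| ≤ w^2 + 2*(|w| * |d|) := by
  have h1 := psi_taylor (t+d) w
  have h2 := psi_taylor t w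
  have h3 : |2 * (min (t+d) 0 - min t 0) * w| ≤ 2*(|d| * |w|) := by
    rw [abs_mul, abs_mul, abs_two]
    have := min_lip (t+d) t
    simp only [show t+d-t = d by ring] at this
    have h4 : (0:ℝ) ≤ |w| := abs_nonneg w
    nlinarith [abs_nonneg (min (t+d) 0 - min t 0)]
  rw [show t+w+d = (t+d)+w by ring] at *
  rw [abs_le] at *
  constructor <;> nlinarith [h3.1, h3.2, le_abs_self (2 * (min (t+d) 0 - min t 0) * w), neg_abs_le (2 * (min (t+d) 0 - min t 0) * w)]

lemma psi_dd_bound' (t w d : ℝ) :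
    |(min (t+w+d) 0)^2 - (min (t+w) 0)^2 - (min (t+d) 0)^2 + (min t 0)^2| ≤ 3*(|w| * |d|) := by
  rcases le_total |w| |d| with h | h
  · have := psi_dd_bound t w d
    nlinarith [abs_nonneg w, abs_nonneg d, sq_abs w]
  · have := psi_dd_bound t d w
    rw [show t+d+w = t+w+d by ring] at this
    rw [abs_le] at this ⊢
    constructor <;> nlinarith [abs_nonneg w, abs_nonneg d, sq_abs d]

lemma wd_eps (ε : ℝ) (hε : 0 < ε) (w d : ℝ) :
    3*(|w| * |d|) ≤ (3/2) * (ε * w^2 + ε⁻¹ * d^2) := by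
  have h5 : ε * (ε⁻¹ * d^2) = d^2 := by field_simp
  nlinarith [sq_nonneg (ε*|w| - |d|), sq_abs w, sq_abs d, abs_nonneg w, abs_nonneg d, hε,
    mul_pos hε hε, sq_nonneg (ε*w - d), sq_nonneg (ε*w + d)]

lemma phi_dd_le (a b : ℝ) (ha : 0 < a) (hab : a ≤ b) (ε : ℝ) (hε : 0 < ε) (t w d : ℝ) :
    phiAB a b (t+w) + phiAB a b (t+d) - phiAB a b t - phiAB a b (t+w+d)
      ≤ (3*b/2) * (ε * w^2 + ε⁻¹ * d^2) := by
  have hwd := wd_eps ε hε w d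
  have hE := (abs_le.1 (psi_dd_bound' t w d)).1
  have hg : (0:ℝ) ≤ b - a := by linarith
  have h1 : (b-a) * (-((min (t+w+d) 0)^2 - (min (t+w) 0)^2 - (min (t+d) 0)^2 + (min t 0)^2))
      ≤ (b-a) * (3*(|w| * |d|)) := by
    apply mul_le_mul_of_nonneg_left _ hg; linarith
  have h2 : a * (-(w*d)) ≤ a * (|w| * |d|) := by
    apply mul_le_mul_of_nonneg_left _ ha.le
    rw [← abs_mul]; exact neg_le_abs _
  have h3 : (0:ℝ) ≤ |w| * |d| := mul_nonneg (abs_nonneg w) (abs_nonneg d)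
  have h4 : b * (3*(|w| * |d|)) ≤ b * ((3/2) * (ε * w^2 + ε⁻¹ * d^2)) :=
    mul_le_mul_of_nonneg_left hwd (by linarith)
  simp only [phiAB_eq]
  nlinarith [h1, h2, h3, h4, mul_nonneg ha.le h3]

lemma phi_mid_ge (a b : ℝ) (ha : 0 < a) (hab : a ≤ b) (s t : ℝ) :
    a/2 * (s-t)^2 ≤ phiAB a b s + phiAB a b t - 2 * phiAB a b (2⁻¹ * (s+t)) := by
  have hpm : (min s 0 + min t 0)/2 ≤ min (2⁻¹*(s+t)) 0 := by
    apply le_min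
    · have := min_le_left s 0; have := min_le_left t 0; linarith
    · have := min_le_right s 0; have := min_le_right t 0; linarith
  have hm0 : min (2⁻¹*(s+t)) 0 ≤ 0 := min_le_right _ _
  have hsq : (min (2⁻¹*(s+t)) 0)^2 ≤ ((min s 0 + min t 0)/2)^2 := by nlinarith
  simp only [phiAB_eq]
  nlinarith [sq_nonneg (min s 0 - min t 0), sub_nonneg.2 hab]

lemma phi_abs_le (a b : ℝ) (ha : 0 ≤ a) (hb : 0 ≤ b) (t : ℝ) : |phiAB a b t| ≤ (a+b) * t^2 := by
  have h1 : (max t 0)^2 ≤ t^2 := by rcases le_total t 0 with h|h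
                                    · rw [max_eq_right h]; nlinarith [sq_nonneg t]
                                    · rw [max_eq_left h]
  have h2 : (max (-t) 0)^2 ≤ t^2 := by rcases le_total t 0 with h|h
                                       · rw [max_eq_left (by linarith)]; nlinarith
                                       · rw [max_eq_right (by linarith)]; nlinarith [sq_nonneg t]
  have h0 : 0 ≤ phiAB a b t := by unfold phiAB; positivity
  rw [abs_of_nonneg h0, phiAB]
  nlinarith [mul_le_mul_of_nonneg_left h1 ha, mul_le_mul_of_nonneg_left h2 hb]

lemma continuous_phiAB (a b : ℝ) : Continuous (phiAB a b) := by unfold phiAB; fun_prop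

lemma sq_max_le (t : ℝ) : (max t 0)^2 ≤ t^2 := by
  rcases le_total t 0 with h|h
  · rw [max_eq_right h]; nlinarith [sq_nonneg t]
  · rw [max_eq_left h]

section Meas
variable {α' : Type*} [MeasurableSpace α'] {μ : Measure α'}

lemma normsq_eq (f : Lp ℝ 2 μ) : ‖f‖^2 = ∫ x, (f x)^2 ∂μ := by
  rw [← real_inner_self_eq_norm_sq, L2.inner_def]
  exact integral_congr_ae (by filter_upwards with x; simp [RCLike.inner_apply, sq])

lemma int_sq (f : Lp ℝ 2 μ) : Integrable (fun x => (f x)^2) μ := (Lp.memLp f).integrable_sq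

lemma int_phi (a b : ℝ) (ha : 0 ≤ a) (hb : 0 ≤ b) (f : Lp ℝ 2 μ) :
    Integrable (fun x => phiAB a b (f x)) μ := by
  apply Integrable.mono' (((int_sq f).const_mul (a+b)))
    ((continuous_phiAB a b).comp_aestronglyMeasurable (Lp.aestronglyMeasurable f))
  filter_upwards with x
  simpa [Real.norm_eq_abs] using phi_abs_le a b ha hb (f x)

lemma int_phi_congr (a b : ℝ) (ha : 0 ≤ a) (hb : 0 ≤ b) (f : Lp ℝ 2 μ) {g : α' → ℝ}
    (hg : ⇑f =ᵐ[μ] g) : Integrable (fun x => phiAB a b (g x)) μ :=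
  (int_phi a b ha hb f).congr (hg.mono fun x hx => by simp only [hx])

lemma int_phi_eq (a b : ℝ) (ha : 0 ≤ a) (hb : 0 ≤ b) (f : Lp ℝ 2 μ) {g : α' → ℝ}
    (hg : ⇑f =ᵐ[μ] g) : ∫ x, phiAB a b (f x) ∂μ = ∫ x, phiAB a b (g x) ∂μ :=
  integral_congr_ae (hg.mono fun x hx => by simp only [hx])

lemma Jfun_eq' {X₀ : Type*} [NormedAddCommGroup X₀] [InnerProductSpace ℝ X₀]
    (T : X₀ →ₗ[ℝ] Lp ℝ 2 μ) (a b : ℝ) (ha : 0 ≤ a) (hb : 0 ≤ b) (u : X₀) :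
    Jfun T a b u = (⟪u, u⟫ - ∫ x, phiAB a b ((T u) x) ∂μ) / 2 := by
  have hmp : AEStronglyMeasurable (fun x => (max ((T u) x) 0)^2) μ :=
    (show Continuous (fun t : ℝ => (max t 0)^2) by fun_prop).comp_aestronglyMeasurable
      (Lp.aestronglyMeasurable (T u))
  have hmn : AEStronglyMeasurable (fun x => (max (-(T u) x) 0)^2) μ :=
    (show Continuous (fun t : ℝ => (max (-t) 0)^2) by fun_prop).comp_aestronglyMeasurable
      (Lp.aestronglyMeasurable (T u))
  have hpos : ‖Lp.posPart (T u)‖^2 = ∫ x, (max ((T u) x) 0)^2 ∂μ := by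
    rw [normsq_eq]
    exact integral_congr_ae ((Lp.coeFn_posPart (T u)).mono fun x hx => by simp [hx])
  have hneg : ‖Lp.negPart (T u)‖^2 = ∫ x, (max (-(T u) x) 0)^2 ∂μ := by
    rw [normsq_eq]
    exact integral_congr_ae ((Lp.coeFn_negPart_eq_max (T u)).mono fun x hx => by simp [hx])
  have hintp : Integrable (fun x => (max ((T u) x) 0)^2) μ := by
    apply (int_sq (T u)).mono' hmp
    filter_upwards with x
    rw [Real.norm_eq_abs, abs_of_nonneg (by positivity)]
    exact sq_max_le _
  have hintn : Integrable (fun x => (max (-(T u) x) 0)^2) μ := by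
    apply (int_sq (T u)).mono' hmn
    filter_upwards with x
    rw [Real.norm_eq_abs, abs_of_nonneg (by positivity)]
    calc (max (-(T u) x) 0)^2 ≤ (-(T u) x)^2 := sq_max_le _
    _ = ((T u) x)^2 := by ring
  have : ∫ x, phiAB a b ((T u) x) ∂μ
      = a * ∫ x, (max ((T u) x) 0)^2 ∂μ + b * ∫ x, (max (-(T u) x) 0)^2 ∂μ := by
    rw [← integral_const_mul, ← integral_const_mul,
      ← integral_add (hintp.const_mul a) (hintn.const_mul b)]
    rfl
  rw [Jfun, this, hpos, hneg]
  ring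
end Meas

section Meas2
variable {α' : Type*} [MeasurableSpace α'] {μ : Measure α'}
lemma Imid (a b : ℝ) (ha : 0 < a) (hab : a ≤ b) (f g : Lp ℝ 2 μ) :
    a/2 * ‖f - g‖^2 ≤ (∫ x, phiAB a b (f x) ∂μ) + (∫ x, phiAB a b (g x) ∂μ)
      - 2 * ∫ x, phiAB a b (((2⁻¹ : ℝ) • (f+g)) x) ∂μ := by
  have hb0 : (0:ℝ) ≤ b := by linarith
  have hcoe : ⇑((2⁻¹ : ℝ) • (f+g)) =ᵐ[μ] fun x => 2⁻¹ * (f x + g x) := by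
    filter_upwards [Lp.coeFn_smul (2⁻¹ : ℝ) (f+g), Lp.coeFn_add f g] with x h1 h2
    simp only [h1, h2, Pi.smul_apply, Pi.add_apply, smul_eq_mul]
  have hsub : ‖f - g‖^2 = ∫ x, (f x - g x)^2 ∂μ := by
    rw [normsq_eq]
    exact integral_congr_ae ((Lp.coeFn_sub f g).mono fun x hx => by
      simp only [hx, Pi.sub_apply])
  rw [int_phi_eq a b ha.le hb0 _ hcoe, hsub]
  have hIf := int_phi a b ha.le hb0 f
  have hIg := int_phi a b ha.le hb0 g
  have hIm := int_phi_congr a b ha.le hb0 ((2⁻¹ : ℝ) • (f+g)) hcoe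
  have hIm2 : Integrable (fun x => 2 * phiAB a b (2⁻¹ * (f x + g x))) μ := hIm.const_mul 2
  have hIfg : Integrable (fun x => phiAB a b (f x) + phiAB a b (g x)) μ := hIf.add hIg
  have hIsq0 : Integrable (fun x => (f x - g x)^2) μ :=
    (int_sq (f - g)).congr ((Lp.coeFn_sub f g).mono fun x hx => by
      simp only [hx, Pi.sub_apply])
  have hIsq : Integrable (fun x => a/2 * (f x - g x)^2) μ := hIsq0.const_mul _
  have key : ∫ x, (a/2) * (f x - g x)^2 ∂μ
      ≤ ∫ x, (phiAB a b (f x) + phiAB a b (g x) - 2 * phiAB a b (2⁻¹ * (f x + g x))) ∂μ := by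
    apply integral_mono hIsq (hIfg.sub hIm2)
    intro x
    exact phi_mid_ge a b ha hab (f x) (g x)
  rw [integral_sub hIfg hIm2, integral_add hIf hIg, integral_const_mul, integral_const_mul] at key
  linarith

lemma Idd (a b : ℝ) (ha : 0 < a) (hab : a ≤ b) (ε : ℝ) (hε : 0 < ε) (f W D : Lp ℝ 2 μ) :
    (∫ x, phiAB a b ((f+W) x) ∂μ) + (∫ x, phiAB a b ((f+D) x) ∂μ)
      - (∫ x, phiAB a b (f x) ∂μ) - (∫ x, phiAB a b ((f+W+D) x) ∂μ)
      ≤ (3*b/2) * (ε * ‖W‖^2 + ε⁻¹ * ‖D‖^2) := by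
  have hb0 : (0:ℝ) ≤ b := by linarith
  have hW : ⇑(f+W) =ᵐ[μ] fun x => f x + W x := Lp.coeFn_add f W
  have hD : ⇑(f+D) =ᵐ[μ] fun x => f x + D x := Lp.coeFn_add f D
  have hWD : ⇑(f+W+D) =ᵐ[μ] fun x => f x + W x + D x := by
    filter_upwards [Lp.coeFn_add (f+W) D, Lp.coeFn_add f W] with x h1 h2
    simp only [h1, h2, Pi.add_apply]
  rw [int_phi_eq a b ha.le hb0 _ hW, int_phi_eq a b ha.le hb0 _ hD, int_phi_eq a b ha.le hb0 _ hWD]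
  have hIW := int_phi_congr a b ha.le hb0 (f+W) hW
  have hID := int_phi_congr a b ha.le hb0 (f+D) hD
  have hIf := int_phi a b ha.le hb0 f
  have hIWD := int_phi_congr a b ha.le hb0 (f+W+D) hWD
  have hI1 : Integrable (fun x => phiAB a b (f x + W x) + phiAB a b (f x + D x)) μ :=
    hIW.add hID
  have hI2 : Integrable (fun x => phiAB a b (f x + W x) + phiAB a b (f x + D x)
      - phiAB a b (f x)) μ := hI1.sub hIf
  have hIW2 : Integrable (fun x => ε * (W x)^2) μ := (int_sq W).const_mul ε
  have hID2 : Integrable (fun x => ε⁻¹ * (D x)^2) μ := (int_sq D).const_mul ε⁻¹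
  have hI3 : Integrable (fun x => ε * (W x)^2 + ε⁻¹ * (D x)^2) μ := hIW2.add hID2
  have hRint : Integrable (fun x => (3*b/2) * (ε * (W x)^2 + ε⁻¹ * (D x)^2)) μ :=
    hI3.const_mul _
  have key : ∫ x, (phiAB a b (f x + W x) + phiAB a b (f x + D x) - phiAB a b (f x)
        - phiAB a b (f x + W x + D x)) ∂μ
      ≤ ∫ x, (3*b/2) * (ε * (W x)^2 + ε⁻¹ * (D x)^2) ∂μ := by
    apply integral_mono (hI2.sub hIWD) hRint
    intro x
    exact phi_dd_le a b ha hab ε hε (f x) (W x) (D x)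
  rw [integral_sub hI2 hIWD, integral_sub hI1 hIf, integral_add hIW hID,
    integral_const_mul, integral_add hIW2 hID2, integral_const_mul, integral_const_mul] at key
  rw [normsq_eq W, normsq_eq D]
  linarith

end Meas2

set_option maxHeartbeats 1000000 in
theorem stmt_5
    {n : ℕ} {s : ℝ} (hs0 : 0 < s) (hs1 : s < 1) (hns : 2 * s < (n : ℝ))
    {Ωs : Set (EuclideanSpace ℝ (Fin n))} (hΩb : Bornology.IsBounded Ωs)
    (hΩm : MeasurableSet Ωs)
    {K : EuclideanSpace ℝ (Fin n) → ℝ} (hKpos : ∀ x, x ≠ 0 → 0 < K x)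
    (hK1 : Integrable (fun x => min (‖x‖ ^ 2) 1 * K x))
    (hK2 : ∃ lam > 0, ∀ x, x ≠ 0 → lam * ‖x‖ ^ (-((n : ℝ) + 2 * s)) ≤ K x)
    (hK3 : ∀ x, K (-x) = K x)
    {X₀ : Type*} [NormedAddCommGroup X₀] [InnerProductSpace ℝ X₀] [CompleteSpace X₀]
    (T : X₀ →ₗ[ℝ] Lp ℝ 2 (volume.restrict Ωs)) (hT : Function.Injective T)
    {lk lk1 : ℝ} (hlk0 : 0 < lk) (hlk : lk < lk1)
    (V₁ V₂ : Submodule ℝ X₀) [FiniteDimensional ℝ V₁]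
    (hV₂ : ∀ v : X₀, v ∈ V₂ ↔ ∀ u ∈ V₁, ⟪u, v⟫ = 0 ∧ ⟪T u, T v⟫ = 0)
    (hcompl : IsCompl V₁ V₂)
    (hV₁b : ∀ u ∈ V₁, ⟪u, u⟫ ≤ lk * ‖T u‖ ^ 2)
    (hV₂b : ∀ v ∈ V₂, lk1 * ‖T v‖ ^ 2 ≤ ⟪v, v⟫)
    (lam1 : ℝ) (hlam1 : 0 < lam1)
    (hPoin : ∀ u : X₀, lam1 * ‖T u‖ ^ 2 ≤ ⟪u, u⟫)
    {α β : ℝ} (hA : lk < α) (hAB : α ≤ β)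
    (M : V₂ → V₁)
    (hM : ∀ (v : V₂) (u : V₁),
      Jfun T α β ((u : X₀) + (v : X₀)) ≤ Jfun T α β ((M v : X₀) + (v : X₀)))
    :
    ∃ C > 0, ∀ v₁ v₂ : V₂,
      ‖(M v₂ : X₀) - (M v₁ : X₀)‖ ≤ C * ‖T ((v₂ : X₀) - (v₁ : X₀))‖ := by
  have hα0 : 0 < α := lt_trans hlk0 hA
  have hβ0 : 0 < β := lt_of_lt_of_le hα0 hAB
  set δ : ℝ := (α - lk)/(4*lk) with hδdef
  have hδ : 0 < δ := by apply div_pos <;> linarith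
  set ε : ℝ := (2*δ*lam1)/(3*β) with hεdef
  have hε : 0 < ε := by apply div_pos <;> [positivity; linarith]
  have hβne : β ≠ 0 := ne_of_gt hβ0
  have hlkne : lk ≠ 0 := ne_of_gt hlk0
  have heps : (3*β/2)*ε = δ*lam1 := by rw [hεdef]; field_simp
  set C₀ : ℝ := (3*β/2)*ε⁻¹/(3*δ) with hC₀def
  have hC₀ : 0 < C₀ := by positivity
  refine ⟨Real.sqrt C₀, Real.sqrt_pos.mpr hC₀, fun v₁ v₂ => ?_⟩
  -- Claim 1: quantified over v, u'
  have claim1 : ∀ (v : V₂) (u' : V₁),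
      Jfun T α β ((u' : X₀) + (v : X₀)) ≤ Jfun T α β ((M v : X₀) + (v : X₀))
        - δ * ‖(M v : X₀) - (u' : X₀)‖^2 := by
    intro v u'
    set X : X₀ := (M v : X₀) + (v : X₀) with hXdef
    set Y : X₀ := (u' : X₀) + (v : X₀) with hYdef
    set mid : V₁ := (2⁻¹ : ℝ) • (M v + u') with hmiddef
    have hmidX : (mid : X₀) + (v : X₀) = (2⁻¹ : ℝ) • (X + Y) := by
      simp only [hmiddef, hXdef, hYdef, Submodule.coe_smul, Submodule.coe_add]
      module
    have hMid := hM v mid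
    rw [hmidX] at hMid
    set w' : X₀ := (M v : X₀) - (u' : X₀) with hw'def
    have hw'mem : w' ∈ V₁ := V₁.sub_mem (SetLike.coe_mem _) (SetLike.coe_mem _)
    have hXY : X - Y = w' := by simp only [hXdef, hYdef, hw'def]; abel
    -- quadratic identity
    have hq : ⟪X,X⟫ + ⟪Y,Y⟫ - 2*⟪(2⁻¹ : ℝ) • (X+Y), (2⁻¹ : ℝ) • (X+Y)⟫
        = 2⁻¹ * ‖w'‖^2 := by
      simp only [real_inner_self_eq_norm_sq]
      have h1 : ‖(2⁻¹ : ℝ) • (X+Y)‖^2 = (2⁻¹)^2 * ‖X+Y‖^2 := by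
        rw [norm_smul, mul_pow]; norm_num
      have h2 := norm_add_sq_real X Y
      have h3 := norm_sub_sq_real X Y
      rw [hXY] at h3
      rw [h1, h2, h3]; ring
    -- integral midpoint inequality
    have hTZ : T ((2⁻¹ : ℝ) • (X + Y)) = (2⁻¹ : ℝ) • (T X + T Y) := by
      rw [T.map_smul, T.map_add]
    have hIm := Imid α β hα0 hAB (T X) (T Y)
    rw [← hTZ] at hIm
    have hTXY : T X - T Y = T w' := by rw [← map_sub, hXY]
    rw [hTXY] at hIm
    -- V₁ bound
    have hVb := hV₁b w' hw'mem
    rw [real_inner_self_eq_norm_sq] at hVb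
    -- put the J's in integral form
    simp only [Jfun_eq' T α β hα0.le hβ0.le] at hMid ⊢
    -- conclude by arithmetic
    have hkey : (α/(2*lk)) * ‖w'‖^2 ≤ α/2 * ‖T w'‖^2 := by
      rw [div_mul_eq_mul_div, div_le_iff₀ (by positivity)]
      calc α * ‖w'‖^2 ≤ α * (lk * ‖T w'‖^2) :=
            mul_le_mul_of_nonneg_left hVb hα0.le
        _ = α / 2 * ‖T w'‖ ^ 2 * (2 * lk) := by ring
    have hkey2 : 2*δ*‖w'‖^2 ≤ α/2 * ‖T w'‖^2 - 2⁻¹*‖w'‖^2 := by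
      have hid : 2*((α-lk)/(4*lk)) * ‖w'‖^2 = (α/(2*lk))*‖w'‖^2 - 2⁻¹*‖w'‖^2 := by
        field_simp; ring
      rw [hδdef, hid]; linarith
    linarith [hq, hIm, hMid, hkey2]
  -- main argument
  set u₁ : V₁ := M v₁ with hu₁def
  set u₂ : V₁ := M v₂ with hu₂def
  set w : X₀ := (u₂ : X₀) - (u₁ : X₀) with hwdef
  set d : X₀ := (v₂ : X₀) - (v₁ : X₀) with hddef
  have hwmem : w ∈ V₁ := V₁.sub_mem (SetLike.coe_mem _) (SetLike.coe_mem _)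
  have hdmem : d ∈ V₂ := V₂.sub_mem (SetLike.coe_mem _) (SetLike.coe_mem _)
  have horth : ⟪w, d⟫ = 0 := ((hV₂ d).mp hdmem w hwmem).1
  have S1 := claim1 v₁ u₂
  have S2 := claim1 v₂ u₁
  rw [← hu₁def] at S1
  rw [← hu₂def] at S2
  have hn1 : ‖(u₁ : X₀) - (u₂ : X₀)‖ = ‖w‖ := by rw [hwdef, norm_sub_rev]
  have hn2 : ‖(u₂ : X₀) - (u₁ : X₀)‖ = ‖w‖ := by rw [hwdef]
  rw [hn1] at S1
  rw [hn2] at S2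
  -- quadratic identity
  have hq2 : ⟪(u₂:X₀)+(v₁:X₀), (u₂:X₀)+(v₁:X₀)⟫ + ⟪(u₁:X₀)+(v₂:X₀), (u₁:X₀)+(v₂:X₀)⟫
      = ⟪(u₁:X₀)+(v₁:X₀), (u₁:X₀)+(v₁:X₀)⟫ + ⟪(u₂:X₀)+(v₂:X₀), (u₂:X₀)+(v₂:X₀)⟫ := by
    rw [hwdef, hddef, inner_sub_left, inner_sub_right, inner_sub_right] at horth
    simp only [real_inner_self_eq_norm_sq]
    have e1 := norm_add_sq_real (u₂:X₀) (v₁:X₀)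
    have e2 := norm_add_sq_real (u₁:X₀) (v₂:X₀)
    have e3 := norm_add_sq_real (u₁:X₀) (v₁:X₀)
    have e4 := norm_add_sq_real (u₂:X₀) (v₂:X₀)
    linarith [e1, e2, e3, e4, horth]
  -- integral inequality
  set fL := T ((u₁:X₀)+(v₁:X₀)) with hfLdef
  set Wl := T w with hWldef
  set Dl := T d with hDldef
  have e2' : fL + Wl = T ((u₂:X₀)+(v₁:X₀)) := by
    rw [hfLdef, hWldef, ← T.map_add]; congr 1; rw [hwdef]; abel
  have e3' : fL + Dl = T ((u₁:X₀)+(v₂:X₀)) := by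
    rw [hfLdef, hDldef, ← T.map_add]; congr 1; rw [hddef]; abel
  have e4' : fL + Wl + Dl = T ((u₂:X₀)+(v₂:X₀)) := by
    rw [hfLdef, hWldef, hDldef, ← T.map_add, ← T.map_add]; congr 1; rw [hwdef, hddef]; abel
  have hIe := Idd α β hα0 hAB ε hε fL Wl Dl
  rw [e4', e2', e3'] at hIe
  -- expand J
  simp only [Jfun_eq' T α β hα0.le hβ0.le] at S1 S2
  rw [← hfLdef] at S1
  -- Poincaré
  have hP := hPoin w
  rw [real_inner_self_eq_norm_sq] at hP
  have hPε : (3*β/2)*(ε*‖Wl‖^2) ≤ δ*‖w‖^2 := by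
    calc (3*β/2)*(ε*‖Wl‖^2) = ((3*β/2)*ε)*‖Wl‖^2 := by ring
      _ = δ*(lam1*‖Wl‖^2) := by rw [heps]; ring
      _ ≤ δ*‖w‖^2 := mul_le_mul_of_nonneg_left hP hδ.le
  have hfinal : ‖w‖^2 ≤ C₀ * ‖Dl‖^2 := by
    rw [hC₀def, div_mul_eq_mul_div, le_div_iff₀ (by positivity)]
    linarith [S1, S2, hq2, hIe, hPε]
  calc ‖w‖ = Real.sqrt (‖w‖^2) := (Real.sqrt_sq (norm_nonneg w)).symm
    _ ≤ Real.sqrt (C₀ * ‖Dl‖^2) := Real.sqrt_le_sqrt hfinal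
    _ = Real.sqrt C₀ * Real.sqrt (‖Dl‖^2) := Real.sqrt_mul hC₀.le _
    _ = Real.sqrt C₀ * ‖Dl‖ := by rw [Real.sqrt_sq (norm_nonneg Dl)]
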